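/- Let P be a probability distribution on {1,...,n}, T ∈ [0,1], S ∈ (0,1], and assume S > 0. Then there exist a finite-dimensional complex Hilbert space H, unit vectors ψ, φ ∈ H, and operators V_1,...,V_n on H with sum_k V_k†V_k = 1, such that |⟨φ,ψ⟩|² = T, sum_j |⟨φ, V_j ψ⟩|² = S, and |⟨φ, V_k ψ⟩|² = P(k)·S for all k. (No constraints: any (P,T,S) is realizable by a generalized measurement.) -/

import Mathlib

open scoped InnerProductSpace

/-- A model of an `n`-outcome generalized (Kraus) measurement with postselection,
realizing outcome distribution `P`, transition probability `T`, success probability `S`. -/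
structure GeneralizedModel (n : ℕ) (P : Fin n → ℝ) (T S : ℝ) where
  H : Type
  [normed : NormedAddCommGroup H]
  [inner_ : InnerProductSpace ℂ H]
  [findim : FiniteDimensional ℂ H]
  ψ : H
  φ : H
  V : Fin n → H →ₗ[ℂ] H
  norm_ψ : ‖ψ‖ = 1
  norm_φ : ‖φ‖ = 1
  complete : ∑ k, LinearMap.adjoint (V k) ∘ₗ V k = LinearMap.id
  hT : ‖⟪φ, ψ⟫_ℂ‖ ^ 2 = T
  hS : ∑ j, ‖⟪φ, V j ψ⟫_ℂ‖ ^ 2 = S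
  hP : ∀ k, ‖⟪φ, V k ψ⟫_ℂ‖ ^ 2 = P k * S

theorem stmt_19 (n : ℕ) (P : Fin n → ℝ) (hP : ∀ k, 0 ≤ P k) (hPsum : ∑ k, P k = 1)
    (T S : ℝ) (hT0 : 0 ≤ T) (hT1 : T ≤ 1) (hS0 : 0 < S) (hS1 : S ≤ 1) :
    Nonempty (GeneralizedModel n P T S) := by
  set a : ℝ := Real.sqrt T with ha
  set b : ℝ := Real.sqrt (1 - T) with hb
  set c : ℝ := Real.sqrt S with hc
  set d : ℝ := Real.sqrt (1 - S) with hd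
  have ha0 : 0 ≤ a := Real.sqrt_nonneg _
  have hc0 : 0 ≤ c := Real.sqrt_nonneg _
  have ha2 : a ^ 2 = T := Real.sq_sqrt hT0
  have hb2 : b ^ 2 = 1 - T := Real.sq_sqrt (by linarith)
  have hc2 : c ^ 2 = S := Real.sq_sqrt hS0.le
  have hd2 : d ^ 2 = 1 - S := Real.sq_sqrt (by linarith)
  have hab : a ^ 2 + b ^ 2 = 1 := by rw [ha2, hb2]; ring
  have hcd : c ^ 2 + d ^ 2 = 1 := by rw [hc2, hd2]; ring
  let ψ : EuclideanSpace ℂ (Fin 3) := (WithLp.equiv 2 _).symm ![(a : ℂ), (b : ℂ), 0]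
  let φ : EuclideanSpace ℂ (Fin 3) := EuclideanSpace.single 0 1
  let A : Matrix (Fin 3) (Fin 3) ℂ :=
    !![((c*a+d*b : ℝ) : ℂ), ((c*b-d*a : ℝ) : ℂ), 0;
       0, 0, 1;
       ((d*a-c*b : ℝ) : ℂ), ((d*b+c*a : ℝ) : ℂ), 0]
  let B : EuclideanSpace ℂ (Fin 3) →ₗ[ℂ] EuclideanSpace ℂ (Fin 3) := Matrix.toEuclideanLin A
  have hAHA : A.conjTranspose * A = 1 := by
    ext i j
    fin_cases i <;> fin_cases j <;>
      simp [A, Matrix.mul_apply, Fin.sum_univ_three, Matrix.conjTranspose_apply,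
        Matrix.one_apply, ← Complex.ofReal_mul, ← Complex.ofReal_add]
    all_goals norm_cast
    all_goals first
      | ring1
      | linear_combination (c ^ 2 + d ^ 2) * hab + hcd
  have hBB : LinearMap.adjoint B ∘ₗ B = LinearMap.id := by
    show LinearMap.adjoint (Matrix.toEuclideanLin A) ∘ₗ Matrix.toEuclideanLin A = LinearMap.id
    rw [← Matrix.toEuclideanLin_conjTranspose_eq_adjoint, Matrix.toEuclideanLin_eq_toLin,
      ← Matrix.toLin_mul, hAHA, Matrix.toLin_one]
  have hBψ : ⟪φ, B ψ⟫_ℂ = (c : ℂ) := by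
    simp only [B, ψ, φ, WithLp.equiv_symm_apply, Matrix.toEuclideanLin_apply_piLp_toLp]
    rw [EuclideanSpace.inner_single_left]
    simp [Matrix.mulVec, dotProduct, Fin.sum_univ_three, A,
      WithLp.ofLp_toLp]
    norm_cast
    linear_combination c * hab
  refine ⟨⟨EuclideanSpace ℂ (Fin 3), ψ, φ,
    fun k => (Real.sqrt (P k) : ℂ) • B, ?_, ?_, ?_, ?_, ?_, ?_⟩⟩
  · -- norm ψ
    rw [EuclideanSpace.norm_eq]
    simp [ψ, Fin.sum_univ_three, WithLp.equiv_symm_apply]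
    exact hab
  · simp [φ]
  · -- complete
    have hadj : ∀ k : Fin n, LinearMap.adjoint ((Real.sqrt (P k) : ℂ) • B)
        = (starRingEnd ℂ) (Real.sqrt (P k) : ℂ) • LinearMap.adjoint B := by
      intro k; exact LinearMap.adjoint.map_smulₛₗ _ _
    calc ∑ k, LinearMap.adjoint ((Real.sqrt (P k) : ℂ) • B) ∘ₗ ((Real.sqrt (P k) : ℂ) • B)
        = ∑ k, ((P k : ℂ)) • (LinearMap.adjoint B ∘ₗ B) := by
          refine Finset.sum_congr rfl fun k _ => ?_
          rw [hadj k, LinearMap.smul_comp, LinearMap.comp_smul, smul_smul]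
          congr 1
          rw [Complex.conj_ofReal, ← Complex.ofReal_mul,            Real.mul_self_sqrt (hP k)]
      _ = ((∑ k, P k : ℝ) : ℂ) • (LinearMap.adjoint B ∘ₗ B) := by
          rw [← Finset.sum_smul]; push_cast; rfl
      _ = LinearMap.id := by rw [hPsum, hBB]; simp
  · -- hT
    have : ⟪φ, ψ⟫_ℂ = (a : ℂ) := by
      simp [φ, ψ, EuclideanSpace.inner_single_left]
    rw [this, Complex.norm_real, Real.norm_of_nonneg ha0, ha2]
  · -- hS
    have : ∀ j : Fin n, ‖⟪φ, ((Real.sqrt (P j) : ℂ) • B) ψ⟫_ℂ‖ ^ 2 = P j * S := by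
      intro j
      rw [LinearMap.smul_apply, inner_smul_right, norm_mul, hBψ]
      rw [Complex.norm_real, Complex.norm_real, Real.norm_of_nonneg (Real.sqrt_nonneg _),
        Real.norm_of_nonneg hc0, mul_pow, Real.sq_sqrt (hP j), hc2]
    rw [Finset.sum_congr rfl fun j _ => this j, ← Finset.sum_mul, hPsum, one_mul]
  · -- hP
    intro k
    rw [LinearMap.smul_apply, inner_smul_right, norm_mul, hBψ]
    rw [Complex.norm_real, Complex.norm_real, Real.norm_of_nonneg (Real.sqrt_nonneg _),
      Real.norm_of_nonneg hc0, mul_pow, Real.sq_sqrt (hP k), hc2]
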